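/- In any transposed Novikov-Poisson algebra (A,·,∘) over a field whose characteristic is neither 2 nor 3, the identity (x∘y)∘(h·z) = (y∘x)∘(h·z) holds for all x,y,z,h ∈ A. -/
import Mathlib


/-- In a transposed Novikov-Poisson algebra over a field of
characteristic neither 2 nor 3, (x∘y)∘(h·z) = (y∘x)∘(h·z). -/
theorem stmt9 {k A : Type*} [Field k] [AddCommGroup A] [Module k A]
    (hchar2 : (2:k) ≠ 0) (hchar3 : (3:k) ≠ 0)
    (mul cir : A →ₗ[k] A →ₗ[k] A)
    (hcomm : ∀ x y : A, mul x y = mul y x)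
    (hassoc : ∀ x y z : A, mul (mul x y) z = mul x (mul y z))
    (hnov1 : ∀ x y z : A, cir (cir x y) z = cir (cir x z) y)
    (hnov2 : ∀ x y z : A, cir (cir x y) z - cir x (cir y z) = cir (cir y x) z - cir y (cir x z))
    (htnp1 : ∀ x y z : A, cir (mul x y) z = cir (mul x z) y)
    (htnp2 : ∀ x y z : A, (2:k) • mul z (cir x y) = cir (mul z x) y + cir x (mul z y)) :
    ∀ x y z h : A, cir (cir x y) (mul h z) = cir (cir y x) (mul h z) := by
  intro x y z h
  -- primitive instances
  have P1 := htnp2 x z h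
  have P2 := htnp2 y z h
  have P3 := htnp2 y (cir x z) h
  have P4 := htnp2 x (cir y z) h
  have P5 := hnov2 x y z
  have P6 := hnov2 x y (mul h z)
  have P7 := hnov2 y (mul h x) z
  have P8 := hnov2 x (mul h y) z
  have P9 := htnp2 y x h
  have P10 := htnp2 x y h
  have P11 := htnp1 h x y
  have P12 := htnp2 (cir x y) z h
  have P13 := htnp2 (cir y x) z h
  have N1 := hnov1 x y (mul h z)
  have N2 := hnov1 y x (mul h z)
  have Q1 := htnp1 h (cir x z) y
  have Q1' := htnp1 h (cir y z) x
  have Q2 := hnov1 (mul h x) z y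
  have Q2' := hnov1 (mul h y) z x
  -- images under linear maps
  have P1y : (2:k) • cir y (mul h (cir x z))
      = cir y (cir (mul h x) z) + cir y (cir x (mul h z)) := by
    rw [← map_smul, P1, map_add]
  have P2x : (2:k) • cir x (mul h (cir y z))
      = cir x (cir (mul h y) z) + cir x (cir y (mul h z)) := by
    rw [← map_smul, P2, map_add]
  have P5h : mul h (cir (cir x y) z) - mul h (cir x (cir y z))
      = mul h (cir (cir y x) z) - mul h (cir y (cir x z)) := by
    rw [← map_sub, P5, map_sub]
  have P1Y : (2:k) • cir (mul h (cir x z)) y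
      = cir (cir (mul h x) z) y + cir (cir x (mul h z)) y := by
    rw [← LinearMap.smul_apply, ← map_smul, P1, map_add, LinearMap.add_apply]
  have P2X : (2:k) • cir (mul h (cir y z)) x
      = cir (cir (mul h y) z) x + cir (cir y (mul h z)) x := by
    rw [← LinearMap.smul_apply, ← map_smul, P2, map_add, LinearMap.add_apply]
  have P9z : (2:k) • cir (mul h (cir y x)) z
      = cir (cir (mul h y) x) z + cir (cir y (mul h x)) z := by
    rw [← LinearMap.smul_apply, ← map_smul, P9, map_add, LinearMap.add_apply]
  have P10z : (2:k) • cir (mul h (cir x y)) z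
      = cir (cir (mul h x) y) z + cir (cir x (mul h y)) z := by
    rw [← LinearMap.smul_apply, ← map_smul, P10, map_add, LinearMap.add_apply]
  have P11z : cir (cir (mul h x) y) z = cir (cir (mul h y) x) z := by rw [P11]
  -- G = 2S
  have HG : cir (cir x y) (mul h z) - cir (cir y x) (mul h z)
      = (2:k) • (cir (mul h y) (cir x z) - cir (mul h x) (cir y z)) := by
    linear_combination (norm := module) N1 - N2 - P1Y + P2X
      + (2:k) • Q1 - (2:k) • Q1' - Q2 + Q2' - P11z
  -- S = -G
  have HS : cir (mul h y) (cir x z) - cir (mul h x) (cir y z)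
      = -(cir (cir x y) (mul h z) - cir (cir y x) (mul h z)) := by
    linear_combination (norm := module) (-2:k) • P3 + (2:k) • P4 - P1y + P2x - P6
      + (4:k) • P5h + P7 - P8 + P9z - P10z - (2:k) • P12 + (2:k) • P13
  have h3 : (3:k) • (cir (cir x y) (mul h z) - cir (cir y x) (mul h z)) = 0 := by
    linear_combination (norm := module) HG + (2:k) • HS
  rcases smul_eq_zero.mp h3 with h' | h'
  · exact absurd h' hchar3
  · exact sub_eq_zero.mp h'
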